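/- The free product G₁ * G₂ of two virtually diffuse groups G₁ and G₂ is virtually diffuse. -/

import Mathlib

/-- A group is diffuse if every finite non-empty subset has an extremal point. -/
def IsDiffuse (Γ : Type*) [Group Γ] : Prop :=
  ∀ A : Finset Γ, A.Nonempty →
    ∃ a ∈ A, ∀ g : Γ, g ≠ 1 → g * a ∉ A ∨ g⁻¹ * a ∉ A

set_option linter.unusedSectionVars false
namespace StmtAux

open Monoid CoprodI

variable {M : Bool → Type*} [∀ b, Group (M b)] [∀ b, DecidableEq (M b)]

/-- inverse of a syllable -/
def si : (Σ b, M b) → (Σ b, M b) := fun s => ⟨s.1, s.2⁻¹⟩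

@[simp] lemma si_si (s : Σ b, M b) : si (si (M := M) s) = s := by
  obtain ⟨b, m⟩ := s
  simp [si]
  exact inv_inv m

@[simp] lemma si_fst (s : Σ b, M b) : (si (M := M) s).1 = s.1 := rfl

/-- product of a list of syllables -/
def fprod (u : List (Σ b, M b)) : CoprodI M := (u.map fun s => CoprodI.of s.2).prod

@[simp] lemma fprod_nil : fprod ([] : List (Σ b, M b)) = 1 := rfl

@[simp] lemma fprod_cons (s : Σ b, M b) (l : List (Σ b, M b)) :
    fprod (s :: l) = CoprodI.of s.2 * fprod l := by
  simp [fprod]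

lemma fprod_append (l₁ l₂ : List (Σ b, M b)) :
    fprod (l₁ ++ l₂) = fprod l₁ * fprod l₂ := by
  simp [fprod]

lemma fprod_reverse_map_si (l : List (Σ b, M b)) :
    fprod ((l.map si).reverse) = (fprod l)⁻¹ := by
  induction l with
  | nil => simp
  | cons s l ih =>
    rw [List.map_cons, List.reverse_cons, fprod_append, ih, fprod_cons]
    simp [si, fprod]
    exact map_inv (CoprodI.of (M := M) (i := s.1)) s.2

/-- the syllable length of an element -/
def wlen (x : CoprodI M) : ℕ := (Word.equiv x).toList.length

lemma fprod_toList_equiv (x : CoprodI M) : fprod (Word.equiv x).toList = x := by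
  have : Word.equiv.symm (Word.equiv x) = x := Equiv.symm_apply_apply _ _
  simpa [Word.equiv, Word.prod, fprod] using this

lemma equiv_apply (x : CoprodI M) : Word.equiv x = x • Word.empty := rfl

lemma equiv_mul (g a : CoprodI M) : Word.equiv (g * a) = g • Word.equiv a := by
  rw [equiv_apply, equiv_apply, mul_smul]

lemma toList_eq_nil_iff (x : CoprodI M) : (Word.equiv x).toList = [] ↔ x = 1 := by
  constructor
  · intro h
    have : Word.equiv x = Word.empty := Word.ext h
    have := congrArg Word.equiv.symm this
    exact (Word.equiv.symm_apply_apply x).symm.trans (this.trans rfl)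
  · rintro rfl
    rw [equiv_apply, one_smul]
    rfl

lemma equiv_inv_toList (x : CoprodI M) :
    (Word.equiv x⁻¹).toList = ((Word.equiv x).toList.map si).reverse := by
  have hne : ∀ s ∈ ((Word.equiv x).toList.map si).reverse, s.2 ≠ 1 := by
    intro s hs
    rw [List.mem_reverse, List.mem_map] at hs
    obtain ⟨t, ht, rfl⟩ := hs
    have := (Word.equiv x).ne_one t ht
    simp [si, this]
    exact inv_ne_one.mpr this
  have hch : (((Word.equiv x).toList.map si).reverse).Chain' fun s t => s.1 ≠ t.1 := by
    rw [List.Chain', List.isChain_reverse]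
    rw [List.isChain_map]
    refine ((Word.equiv x).chain_ne).imp ?_
    intro s t h
    simp only [flip, si, ne_eq]
    exact fun hh => h hh.symm
  set w' : Word M := ⟨((Word.equiv x).toList.map si).reverse, hne, hch⟩ with hw'
  have hprod : Word.equiv.symm w' = x⁻¹ := by
    show Word.prod w' = x⁻¹
    have : Word.prod w' = fprod (((Word.equiv x).toList.map si).reverse) := rfl
    rw [this, fprod_reverse_map_si, fprod_toList_equiv]
  have : Word.equiv x⁻¹ = w' := by
    rw [← hprod]
    simp
  rw [this]


section Smul

lemma equivPair_components {b : Bool} {w : Word M} {y : M b} {rest : List (Σ c, M c)}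
    (hw : w.toList = ⟨b, y⟩ :: rest) :
    (Word.equivPair b w).head = y ∧ (Word.equivPair b w).tail.toList = rest := by
  have hy1 : y ≠ 1 := w.ne_one ⟨b, y⟩ (by rw [hw]; exact List.mem_cons_self)
  have hch := w.chain_ne
  rw [hw, List.isChain_cons] at hch
  have hne : ∀ s ∈ rest, s.2 ≠ 1 := fun s hs => w.ne_one s (by rw [hw]; exact List.mem_cons_of_mem _ hs)
  set t : Word M := ⟨rest, hne, hch.2⟩ with ht
  have hfst : t.fstIdx ≠ some b := by
    rw [Word.fstIdx_ne_iff]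
    intro l hl
    exact fun hbl => hch.1 l (Option.mem_def.mp hl) (by rw [← hbl])
  have hwt : w = Word.cons y t hfst hy1 := by
    apply Word.ext
    rw [hw]
    rfl
  have h1 : Word.equivPair b w = ⟨y * (Word.equivPair b t).head, (Word.equivPair b t).tail,
      (Word.equivPair b t).fstIdx_ne⟩ := by
    rw [hwt, Word.cons_eq_smul, Word.equivPair_smul_same]
  rw [Word.equivPair_eq_of_fstIdx_ne hfst] at h1
  rw [h1]
  simp
  rfl

lemma smul_toList_cancel {b : Bool} {m y : M b} {w : Word M} {rest : List (Σ c, M c)}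
    (hw : w.toList = ⟨b, y⟩ :: rest) (hmy : m * y = 1) :
    (CoprodI.of m • w).toList = rest := by
  obtain ⟨hh, ht⟩ := equivPair_components hw
  rw [Word.of_smul_def, Word.rcons]
  rw [dif_pos (by rw [hh]; exact hmy)]
  exact ht

lemma smul_toList_merge {b : Bool} {m y : M b} {w : Word M} {rest : List (Σ c, M c)}
    (hw : w.toList = ⟨b, y⟩ :: rest) (hmy : m * y ≠ 1) :
    (CoprodI.of m • w).toList = ⟨b, m * y⟩ :: rest := by
  obtain ⟨hh, ht⟩ := equivPair_components hw
  rw [Word.of_smul_def, Word.rcons]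
  rw [dif_neg (by rw [hh]; exact hmy)]
  show (⟨b, m * (Word.equivPair b w).head⟩ : Σ c, M c) :: (Word.equivPair b w).tail.toList
      = ⟨b, m * y⟩ :: rest
  rw [hh, ht]

lemma smul_toList_fresh {b : Bool} {m : M b} (hm : m ≠ 1) {w : Word M}
    (hw : ∀ s ∈ w.toList.head?, s.1 ≠ b) :
    (CoprodI.of m • w).toList = ⟨b, m⟩ :: w.toList := by
  have hfst : w.fstIdx ≠ some b := by
    rw [Word.fstIdx_ne_iff]
    intro l hl
    exact fun hbl => hw l hl (by rw [← hbl])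
  rw [Word.of_smul_def, Word.equivPair_eq_of_fstIdx_ne hfst, Word.rcons]
  simp only []
  rw [dif_neg (by simpa using hm)]
  show (⟨b, m * 1⟩ : Σ c, M c) :: w.toList = _
  rw [mul_one]

end Smul

section Struct

theorem struct (w : Word M) (u : List (Σ b, M b)) :
    (∀ s ∈ u, s.2 ≠ 1) → (u.Chain' fun s t => s.1 ≠ t.1) →
    ∃ k, k ≤ u.length ∧ k ≤ w.toList.length ∧
      (∀ i, i < k → w.toList[i]? = (u[u.length - 1 - i]?).map si) ∧
      ((k = u.length ∧ (fprod u • w).toList = w.toList.drop k) ∨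
       (k < u.length ∧ ∃ (z : Σ b, M b) (δ : ℕ), δ ≤ 1 ∧
         some z.1 = (u[u.length - 1 - k]?).map Sigma.fst ∧
         (fprod u • w).toList = u.take (u.length - 1 - k) ++ z :: w.toList.drop (k + δ))) := by
  induction u with
  | nil =>
    intro _ _
    exact ⟨0, le_refl _, Nat.zero_le _, fun i hi => absurd hi (Nat.not_lt_zero i),
      Or.inl ⟨rfl, by simp⟩⟩
  | cons s l ih =>
    intro hne hch
    obtain ⟨b, m⟩ := s
    have hm : m ≠ 1 := hne ⟨b, m⟩ List.mem_cons_self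
    have hne' : ∀ s ∈ l, s.2 ≠ 1 := fun s hs => hne s (List.mem_cons_of_mem _ hs)
    rw [List.Chain', List.isChain_cons] at hch
    obtain ⟨hhd, hch'⟩ := hch
    obtain ⟨k, hku, hkw, hrel, hres⟩ := ih hne' hch'
    have hsmul : fprod (⟨b, m⟩ :: l) • w = CoprodI.of m • (fprod l • w) := by
      rw [fprod_cons, mul_smul]
    have hshift : ∀ i, i < l.length →
        ((⟨b, m⟩ :: l) : List (Σ b, M b))[l.length - i]? = l[l.length - 1 - i]? := by
      intro i hi
      rw [show l.length - i = (l.length - 1 - i) + 1 by omega, List.getElem?_cons_succ]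
    have hrel' : ∀ i, i < k →
        w.toList[i]? = (((⟨b, m⟩ :: l) : List (Σ b, M b))[(⟨b, m⟩ :: l).length - 1 - i]?).map si := by
      intro i hik
      rw [List.length_cons, show l.length + 1 - 1 - i = l.length - i by omega,
        hshift i (by omega), hrel i hik]
    rcases hres with ⟨hkl, hWl⟩ | ⟨hkl, z, δ, hδ, hz, hWl⟩
    · -- inner word fully consumed l : k = l.length
      cases hd : w.toList.drop k with
      | nil =>
        have hfresh : (CoprodI.of m • (fprod l • w)).toList = ⟨b, m⟩ :: (fprod l • w).toList := by
          apply smul_toList_fresh hm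
          intro s' hs'
          rw [hWl, hd] at hs'
          simp at hs'
        refine ⟨k, by simp; omega, hkw, hrel',
          Or.inr ⟨by simp; omega, ⟨b, m⟩, 0, by norm_num, ?_, ?_⟩⟩
        · rw [List.length_cons, show l.length + 1 - 1 - k = 0 by omega]
          simp
        · rw [hsmul, hfresh, hWl, hd, List.length_cons,
            show l.length + 1 - 1 - k = 0 by omega, Nat.add_zero, hd]
          simp
      | cons sy rest =>
        obtain ⟨j, y⟩ := sy
        have hWl' : (fprod l • w).toList = ⟨j, y⟩ :: rest := by rw [hWl, hd]
        have hkt : k < w.toList.length := by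
          have := congrArg List.length hd
          rw [List.length_drop, List.length_cons] at this
          omega
        have hdrop1 : w.toList.drop (k + 1) = rest := by
          rw [← List.drop_drop, hd, List.drop_one, List.tail_cons]
        by_cases hjb : j = b
        · subst hjb
          by_cases hmy : m * y = 1
          · -- cancellation
            have hcanc := smul_toList_cancel hWl' hmy
            refine ⟨k + 1, by simp; omega, by omega, ?_, Or.inl ⟨by simp; omega, ?_⟩⟩
            · intro i hik
              rcases Nat.lt_or_ge i k with hik' | hik'
              · exact hrel' i hik'
              · have hik'' : i = k := by omega
                subst hik''
                have h1 : w.toList[i]? = some ⟨j, y⟩ := by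
                  rw [show i = i + 0 by omega, ← List.getElem?_drop, hd,
                    List.getElem?_cons_zero]
                rw [h1, List.length_cons, show l.length + 1 - 1 - i = 0 by omega,
                  List.getElem?_cons_zero]
                have hy : y = m⁻¹ := by
                  rw [← inv_inv y, mul_eq_one_iff_eq_inv.mp hmy]
                rw [hy]
                rfl
            · rw [hsmul, hcanc, hdrop1]
          · -- merge
            have hmerge := smul_toList_merge hWl' hmy
            refine ⟨k, by simp; omega, by omega, hrel',
              Or.inr ⟨by simp; omega, ⟨j, m * y⟩, 1, le_refl _, ?_, ?_⟩⟩
            · rw [List.length_cons, show l.length + 1 - 1 - k = 0 by omega,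
                List.getElem?_cons_zero]
              rfl
            · rw [hsmul, hmerge, List.length_cons, show l.length + 1 - 1 - k = 0 by omega,
                hdrop1]
              simp
        · -- fresh letter on different factor
          have hfresh : (CoprodI.of m • (fprod l • w)).toList
              = ⟨b, m⟩ :: (fprod l • w).toList := by
            apply smul_toList_fresh hm
            intro s' hs'
            rw [hWl', List.head?_cons, Option.mem_def, Option.some_inj] at hs'
            rw [← hs']
            exact hjb
          refine ⟨k, by simp; omega, by omega, hrel',
            Or.inr ⟨by simp; omega, ⟨b, m⟩, 0, by norm_num, ?_, ?_⟩⟩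
          · rw [List.length_cons, show l.length + 1 - 1 - k = 0 by omega,
              List.getElem?_cons_zero]
            rfl
          · rw [hsmul, hfresh, hWl, List.length_cons,
              show l.length + 1 - 1 - k = 0 by omega, Nat.add_zero]
            simp
    · -- l not fully consumed: k < l.length
      have hl0 : 0 < l.length := by omega
      have hl0' : l[0]? = some (l[0]'hl0) := List.getElem?_eq_getElem hl0
      have hhead : ∃ zz : (Σ c, M c), (fprod l • w).toList.head? = some zz
          ∧ zz.1 = (l[0]'hl0).1 := by
        by_cases hc : l.length - 1 - k = 0
        · refine ⟨z, ?_, ?_⟩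
          · rw [hWl, hc, List.take_zero, List.nil_append, List.head?_cons]
          · rw [hc, hl0'] at hz
            simpa using hz
        · refine ⟨l[0]'hl0, ?_, rfl⟩
          rw [hWl, List.head?_eq_getElem?, List.getElem?_append, if_pos
            (by rw [List.length_take]; omega), List.getElem?_take, if_pos (by omega), hl0']
      obtain ⟨zz, hzz, hzzfst⟩ := hhead
      have hbne : b ≠ (l[0]'hl0).1 := by
        apply hhd
        rw [List.head?_eq_getElem?, hl0']
        rfl
      have hfresh : (CoprodI.of m • (fprod l • w)).toList = ⟨b, m⟩ :: (fprod l • w).toList := by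
        apply smul_toList_fresh hm
        intro s' hs'
        rw [hzz, Option.mem_def, Option.some_inj] at hs'
        subst hs'
        rw [hzzfst]
        exact fun hc => hbne hc.symm
      refine ⟨k, by simp; omega, hkw, hrel',
        Or.inr ⟨by simp; omega, z, δ, hδ, ?_, ?_⟩⟩
      · rw [List.length_cons, show l.length + 1 - 1 - k = l.length - k by omega,
          hshift k (by omega)]
        exact hz
      · rw [hsmul, hfresh, hWl, List.length_cons,
          show l.length + 1 - 1 - k = (l.length - 1 - k) + 1 by omega, List.take_succ_cons]
        rfl

end Struct

lemma wlen_def (x : CoprodI M) : wlen x = (Word.equiv x).toList.length := rfl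

lemma alt_parity (u : List (Σ b, M b)) (hch : u.Chain' fun s t => s.1 ≠ t.1)
    (h0 : 0 < u.length) :
    ∀ i (hi : i < u.length), (u[i]'hi).1 = if i % 2 = 0 then (u[0]'h0).1 else !(u[0]'h0).1 := by
  intro i
  induction i with
  | zero => intro hi; simp
  | succ i ihp =>
    intro hi
    have hne := List.isChain_iff_getElem.mp hch i (by omega)
    have hstep : (u[i+1]'hi).1 = !((u[i]'(by omega)).1) := by
      revert hne
      cases hb1 : (u[i]'(by omega : i < u.length)).1 <;>
        cases hb2 : (u[i+1]'hi).1 <;> simp_all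
    by_cases hp : i % 2 = 0
    · rw [if_neg (by omega), hstep, ihp (by omega), if_pos hp]
    · rw [if_pos (by omega), hstep, ihp (by omega), if_neg hp, Bool.not_not]

theorem key (g a : CoprodI M) (hg1 : g ≠ 1)
    (hg : ∀ (c : CoprodI M) (b : Bool) (m : M b), g ≠ c * CoprodI.of m * c⁻¹) :
    wlen a < wlen (g * a) ∨ wlen a < wlen (g⁻¹ * a) := by
  by_contra hcon
  push_neg at hcon
  obtain ⟨h1, h2⟩ := hcon
  have hfg : fprod (Word.equiv g).toList = g := fprod_toList_equiv g
  have hga : Word.equiv (g * a) = fprod (Word.equiv g).toList • Word.equiv a := by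
    rw [equiv_mul, hfg]
  have hfg' : fprod (Word.equiv g⁻¹).toList = g⁻¹ := fprod_toList_equiv g⁻¹
  have hga' : Word.equiv (g⁻¹ * a) = fprod (Word.equiv g⁻¹).toList • Word.equiv a := by
    rw [equiv_mul, hfg']
  have hu'eq : (Word.equiv g⁻¹).toList = ((Word.equiv g).toList.map si).reverse :=
    equiv_inv_toList g
  have hn' : (Word.equiv g⁻¹).toList.length = (Word.equiv g).toList.length := by
    rw [hu'eq]; simp
  have hn1 : 1 ≤ (Word.equiv g).toList.length := by
    rcases Nat.eq_zero_or_pos (Word.equiv g).toList.length with h | h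
    · exact absurd ((toList_eq_nil_iff g).mp (List.length_eq_zero_iff.mp h)) hg1
    · exact h
  obtain ⟨k₁, hk₁u, hk₁t, hrel₁, hres₁⟩ :=
    struct (Word.equiv a) (Word.equiv g).toList (Word.equiv g).ne_one (Word.equiv g).chain_ne
  obtain ⟨k₂, hk₂u, hk₂t, hrel₂, hres₂⟩ :=
    struct (Word.equiv a) (Word.equiv g⁻¹).toList (Word.equiv g⁻¹).ne_one
      (Word.equiv g⁻¹).chain_ne
  have hlen1 : (Word.equiv g).toList.length + (Word.equiv a).toList.length
      ≤ (Word.equiv a).toList.length + 2 * k₁ + 1 := by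
    have hwl : (fprod (Word.equiv g).toList • Word.equiv a).toList.length
        ≤ (Word.equiv a).toList.length := by
      rw [← hga, ← wlen_def, ← wlen_def]; exact h1
    rcases hres₁ with ⟨hk, hl⟩ | ⟨hk, z, δ, hδ, hz, hl⟩
    · rw [hl, List.length_drop] at hwl; omega
    · rw [hl, List.length_append, List.length_cons, List.length_take, List.length_drop,
        min_eq_left (by omega)] at hwl
      omega
  have hlen2 : (Word.equiv g).toList.length + (Word.equiv a).toList.length
      ≤ (Word.equiv a).toList.length + 2 * k₂ + 1 := by
    have hwl : (fprod (Word.equiv g⁻¹).toList • Word.equiv a).toList.length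
        ≤ (Word.equiv a).toList.length := by
      rw [← hga', ← wlen_def, ← wlen_def]; exact h2
    rcases hres₂ with ⟨hk, hl⟩ | ⟨hk, z, δ, hδ, hz, hl⟩
    · rw [hl, List.length_drop] at hwl; omega
    · rw [hl, List.length_append, List.length_cons, List.length_take, List.length_drop,
        min_eq_left (by omega)] at hwl
      omega
  rcases Nat.lt_or_ge (Word.equiv g).toList.length 2 with hsmall | hn2
  · -- g is a single syllable, conjugate to itself
    obtain ⟨s, hs⟩ := List.length_eq_one_iff.mp (by omega : (Word.equiv g).toList.length = 1)
    refine hg 1 s.1 s.2 ?_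
    rw [← hfg, hs]
    simp
  -- translate the relations for the inverse side
  have hrel₂' : ∀ i, i < k₂ → (Word.equiv a).toList[i]? = (Word.equiv g).toList[i]? := by
    intro i hik
    have hin : i < (Word.equiv g).toList.length := by omega
    have h := hrel₂ i hik
    rw [hu'eq, List.length_reverse, List.length_map,
      List.getElem?_reverse (by rw [List.length_map]; omega), List.length_map,
      show (Word.equiv g).toList.length - 1 -
        ((Word.equiv g).toList.length - 1 - i) = i from by omega,
      List.getElem?_map] at h
    rw [h, Option.map_map]
    have hid : si (M := M) ∘ si = id := funext si_si
    rw [hid, Option.map_id]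
    rfl
  have hk₁pos : 1 ≤ k₁ := by omega
  have hk₂pos : 1 ≤ k₂ := by omega
  -- first syllable vs last syllable
  have e1 := hrel₁ 0 hk₁pos
  have e2 := hrel₂' 0 hk₂pos
  rw [List.getElem?_eq_getElem (show (Word.equiv g).toList.length - 1 - 0
      < (Word.equiv g).toList.length from by omega)] at e1
  rw [List.getElem?_eq_getElem (show 0 < (Word.equiv g).toList.length from by omega)] at e2
  rw [e2] at e1
  have e3 := Option.some_inj.mp e1
  have hfst0 : ((Word.equiv g).toList[0]'(by omega)).1
      = ((Word.equiv g).toList[(Word.equiv g).toList.length - 1 - 0]'(by omega)).1 := by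
    rw [e3, si_fst]
  simp only [Nat.sub_zero] at hfst0
  have hpar := alt_parity (Word.equiv g).toList (Word.equiv g).chain_ne (by omega)
    ((Word.equiv g).toList.length - 1) (by omega)
  have hodd : ((Word.equiv g).toList.length - 1) % 2 = 0 := by
    by_contra hodd'
    rw [if_neg hodd'] at hpar
    exact (Bool.eq_not_self _).mp (hfst0.trans hpar)
  -- write length = 2 * h + 1
  obtain ⟨hh, hhform⟩ : ∃ hh, (Word.equiv g).toList.length = 2 * hh + 1 :=
    ⟨((Word.equiv g).toList.length - 1) / 2, by omega⟩
  have hh1 : 1 ≤ hh := by omega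
  have hk₁h : hh ≤ k₁ := by omega
  have hk₂h : hh ≤ k₂ := by omega
  have hmidrel : ∀ i, i < hh → (Word.equiv g).toList[i]?
      = ((Word.equiv g).toList[(Word.equiv g).toList.length - 1 - i]?).map si := by
    intro i hi
    rw [← hrel₁ i (by omega), hrel₂' i (by omega)]
  -- the tail of u is the inverse-reverse of its head
  have hdrop : (Word.equiv g).toList.drop (hh + 1)
      = (((Word.equiv g).toList.take hh).map si).reverse := by
    apply List.ext_getElem?
    intro i
    rw [List.getElem?_drop]
    by_cases hih : i < hh
    · rw [List.getElem?_reverse (by rw [List.length_map, List.length_take]; omega),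
        List.length_map, List.length_take, min_eq_left (by omega),
        List.getElem?_map, List.getElem?_take, if_pos (by omega)]
      have := hmidrel (hh - 1 - i) (by omega)
      rw [show (Word.equiv g).toList.length - 1 - (hh - 1 - i) = hh + 1 + i
        from by omega] at this
      rw [this, Option.map_map]
      have hid : si (M := M) ∘ si = id := funext si_si
      rw [hid, Option.map_id]
      rfl
    · rw [List.getElem?_eq_none (by omega), List.getElem?_eq_none
        (by rw [List.length_reverse, List.length_map, List.length_take]; omega)]
  have hu_decomp : (Word.equiv g).toList = (Word.equiv g).toList.take hh
      ++ ((Word.equiv g).toList[hh]'(by omega)) :: (Word.equiv g).toList.drop (hh + 1) := by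
    conv_lhs => rw [← List.take_append_drop hh (Word.equiv g).toList]
    rw [List.drop_eq_getElem_cons (by omega)]
  refine hg (fprod ((Word.equiv g).toList.take hh)) ((Word.equiv g).toList[hh]'(by omega)).1
    ((Word.equiv g).toList[hh]'(by omega)).2 ?_
  conv_lhs => rw [← hfg, hu_decomp]
  rw [fprod_append, fprod_cons, hdrop, fprod_reverse_map_si, mul_assoc]

section Assembly

lemma diffuse_of_injective {G D : Type*} [Group G] [Group D] (f : G →* D)
    (hf : Function.Injective f) (hD : IsDiffuse D) : IsDiffuse G := by
  classical
  intro A hA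
  obtain ⟨d, hd, hext⟩ := hD (A.image f) (hA.image f)
  obtain ⟨a, haA, rfl⟩ := Finset.mem_image.mp hd
  refine ⟨a, haA, fun g hg => ?_⟩
  rcases hext (f g) (fun h => hg (hf (h.trans (map_one f).symm))) with h | h
  · exact Or.inl fun hmem => h (by rw [← map_mul]; exact Finset.mem_image_of_mem f hmem)
  · exact Or.inr fun hmem =>
      h (by rw [← map_inv, ← map_mul]; exact Finset.mem_image_of_mem f hmem)

lemma diffuse_extension {G Q : Type*} [Group G] [Group Q] (f : G →* Q)
    (hker : IsDiffuse f.ker) (hQ : IsDiffuse Q) : IsDiffuse G := by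
  classical
  intro A hA
  obtain ⟨q, hqB, hqext⟩ := hQ (A.image f) (hA.image f)
  have hAq : (A.filter (fun x => f x = q)).Nonempty := by
    obtain ⟨x, hx, hfx⟩ := Finset.mem_image.mp hqB
    exact ⟨x, Finset.mem_filter.mpr ⟨hx, hfx⟩⟩
  obtain ⟨a₀, ha₀⟩ := hAq
  have hfa₀ : f a₀ = q := (Finset.mem_filter.mp ha₀).2
  have ha₀A : a₀ ∈ A := (Finset.mem_filter.mp ha₀).1
  classical
  set S : Finset f.ker := (A.filter (fun x => f x = q)).attach.image
    (fun x => ⟨a₀⁻¹ * x.1, by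
      rw [MonoidHom.mem_ker, map_mul, map_inv, hfa₀, (Finset.mem_filter.mp x.2).2,
        inv_mul_cancel]⟩) with hS
  have hSne : S.Nonempty := ⟨_, Finset.mem_image_of_mem _ (Finset.mem_attach _ ⟨a₀, ha₀⟩)⟩
  obtain ⟨k₀, hk₀S, hk₀ext⟩ := hker S hSne
  have hmemS : ∀ y : f.ker, y ∈ S ↔ (a₀ * y : G) ∈ A ∧ f (a₀ * (y : G)) = q := by
    intro y
    constructor
    · intro hy
      obtain ⟨x, _, hxy⟩ := Finset.mem_image.mp hy
      have hval : (y : G) = a₀⁻¹ * x.1 := by rw [← hxy]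
      have hx2 := Finset.mem_filter.mp x.2
      rw [hval, mul_inv_cancel_left]
      exact ⟨hx2.1, hx2.2⟩
    · rintro ⟨hy1, hy2⟩
      refine Finset.mem_image.mpr ⟨⟨a₀ * y, Finset.mem_filter.mpr ⟨hy1, hy2⟩⟩,
        Finset.mem_attach _ _, ?_⟩
      apply Subtype.ext
      simp
  have hfa : f (a₀ * (k₀ : G)) = q := by
    rw [map_mul, hfa₀, MonoidHom.mem_ker.mp k₀.2, mul_one]
  refine ⟨a₀ * (k₀ : G), ((hmemS k₀).mp hk₀S).1, fun g hg => ?_⟩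
  by_cases hfg : f g = 1
  · -- g in the kernel: use extremality of k₀
    have hg'mem : a₀⁻¹ * g * a₀ ∈ f.ker := by
      rw [MonoidHom.mem_ker, map_mul, map_mul, map_inv, hfg, mul_one]
      simp
    have hg' : (⟨a₀⁻¹ * g * a₀, hg'mem⟩ : f.ker) ≠ 1 := by
      intro hc
      apply hg
      have hval : a₀⁻¹ * g * a₀ = 1 := congrArg Subtype.val hc
      have : g = a₀ * (a₀⁻¹ * g * a₀) * a₀⁻¹ := by group
      rw [hval] at this
      simpa using this
    have key1 : ∀ (u : G) (hu : u ∈ f.ker), g * (a₀ * (k₀ : G)) ∈ A →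
        (⟨a₀⁻¹ * g * a₀, hg'mem⟩ : f.ker) * k₀ ∈ S := by
      intro u hu hmem
      rw [hmemS]
      constructor
      · have hcoe : (a₀ * ((⟨a₀⁻¹ * g * a₀, hg'mem⟩ : f.ker) * k₀ : f.ker) : G)
            = g * (a₀ * (k₀ : G)) := by
          push_cast
          group
        rw [hcoe]
        exact hmem
      · push_cast
        rw [show a₀ * (a₀⁻¹ * g * a₀ * (k₀ : G)) = g * (a₀ * (k₀ : G)) by group,
          map_mul, hfg, hfa, one_mul]
    rcases hk₀ext _ hg' with h | h
    · refine Or.inl fun hmem => h (key1 g (by rwa [MonoidHom.mem_ker]) hmem)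
    · refine Or.inr fun hmem => ?_
      apply h
      rw [hmemS]
      have hinvval : ((⟨a₀⁻¹ * g * a₀, hg'mem⟩ : f.ker)⁻¹ * k₀ : G)
          = a₀⁻¹ * g⁻¹ * a₀ * (k₀ : G) := by
        push_cast
        group
      constructor
      · have hcoe : (a₀ * ((⟨a₀⁻¹ * g * a₀, hg'mem⟩ : f.ker)⁻¹ * k₀ : f.ker) : G)
            = g⁻¹ * (a₀ * (k₀ : G)) := by
          push_cast
          group
        rw [hcoe]
        exact hmem
      · push_cast
        rw [show a₀ * ((a₀⁻¹ * g * a₀)⁻¹ * (k₀ : G)) = g⁻¹ * (a₀ * (k₀ : G)) by group,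
          map_mul, map_inv, hfg, hfa, inv_one, one_mul]
  · -- g not in the kernel: use extremality of q
    rcases hqext (f g) hfg with h | h
    · refine Or.inl fun hmem => h ?_
      rw [show f g * q = f (g * (a₀ * (k₀ : G))) by rw [map_mul, hfa]]
      exact Finset.mem_image_of_mem f hmem
    · refine Or.inr fun hmem => h ?_
      rw [show (f g)⁻¹ * q = f (g⁻¹ * (a₀ * (k₀ : G))) by rw [map_mul, map_inv, hfa]]
      exact Finset.mem_image_of_mem f hmem

lemma diffuse_prod {Q₁ Q₂ : Type*} [Group Q₁] [Group Q₂] (h1 : IsDiffuse Q₁)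
    (h2 : IsDiffuse Q₂) : IsDiffuse (Q₁ × Q₂) := by
  apply diffuse_extension (MonoidHom.fst Q₁ Q₂) ?_ h1
  apply diffuse_of_injective ((MonoidHom.snd Q₁ Q₂).comp (MonoidHom.fst Q₁ Q₂).ker.subtype)
    ?_ h2
  intro x y hxy
  have hx1 : (x : Q₁ × Q₂).1 = 1 := MonoidHom.mem_ker.mp x.2
  have hy1 : (y : Q₁ × Q₂).1 = 1 := MonoidHom.mem_ker.mp y.2
  apply Subtype.ext
  apply Prod.ext
  · rw [hx1, hy1]
  · exact hxy

lemma subgroup_prod_diffuse {G₁ G₂ : Type*} [Group G₁] [Group G₂] {H₁ : Subgroup G₁}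
    {H₂ : Subgroup G₂} (hd₁ : IsDiffuse H₁) (hd₂ : IsDiffuse H₂) :
    IsDiffuse (H₁.prod H₂) := by
  apply diffuse_of_injective (D := ↥H₁ × ↥H₂)
    (MonoidHom.prod
      (((MonoidHom.fst G₁ G₂).comp (H₁.prod H₂).subtype).codRestrict H₁
        (fun x => (Subgroup.mem_prod.mp x.2).1))
      (((MonoidHom.snd G₁ G₂).comp (H₁.prod H₂).subtype).codRestrict H₂
        (fun x => (Subgroup.mem_prod.mp x.2).2)))
    ?_ (diffuse_prod hd₁ hd₂)
  intro x y hxy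
  rw [Prod.ext_iff] at hxy
  obtain ⟨e1, e2⟩ := hxy
  have e1' : (x : G₁ × G₂).1 = (y : G₁ × G₂).1 := congrArg Subtype.val e1
  have e2' : (x : G₁ × G₂).2 = (y : G₁ × G₂).2 := congrArg Subtype.val e2
  exact Subtype.ext (Prod.ext e1' e2')

lemma ker_diffuse {M : Bool → Type*} [∀ b, Group (M b)] {P : Type*} [Group P]
    (χ : CoprodI M →* P) (hχ : ∀ (b : Bool) (m : M b), χ (CoprodI.of m) = 1 → m = 1) :
    IsDiffuse χ.ker := by
  classical
  intro A hA
  obtain ⟨amax, hamax, hmax⟩ :=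
    Finset.exists_max_image (A.image (Subtype.val)) wlen (hA.image _)
  obtain ⟨a, haA, rfl⟩ := Finset.mem_image.mp hamax
  refine ⟨a, haA, fun g hg => ?_⟩
  by_contra hcon
  push_neg at hcon
  obtain ⟨hga, hgia⟩ := hcon
  have hgne : (g : CoprodI M) ≠ 1 := fun hc => hg (Subtype.ext hc)
  have hconj : ∀ (c : CoprodI M) (b : Bool) (m : M b),
      (g : CoprodI M) ≠ c * CoprodI.of m * c⁻¹ := by
    intro c b m hc
    have hker : χ (g : CoprodI M) = 1 := MonoidHom.mem_ker.mp g.2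
    rw [hc, map_mul, map_mul, map_inv] at hker
    have h1 : χ (CoprodI.of m) = 1 := by
      have h2 : (χ c)⁻¹ * (χ c * χ (CoprodI.of m) * (χ c)⁻¹) * χ c
          = (χ c)⁻¹ * 1 * χ c := by rw [hker]
      group at h2
      simpa using h2
    have hm1 := hχ b m h1
    rw [hm1, map_one, mul_one] at hc
    rw [mul_inv_cancel] at hc
    exact hgne hc
  rcases key (g : CoprodI M) (a : CoprodI M) hgne hconj with h | h
  · have hle : wlen ((g : CoprodI M) * (a : CoprodI M)) ≤ wlen (a : CoprodI M) := by
      apply hmax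
      have : ((g * a : χ.ker) : CoprodI M) = (g : CoprodI M) * (a : CoprodI M) := rfl
      rw [← this]
      exact Finset.mem_image_of_mem _ hga
    omega
  · have hle : wlen ((g : CoprodI M)⁻¹ * (a : CoprodI M)) ≤ wlen (a : CoprodI M) := by
      apply hmax
      have : ((g⁻¹ * a : χ.ker) : CoprodI M) = (g : CoprodI M)⁻¹ * (a : CoprodI M) := rfl
      rw [← this]
      exact Finset.mem_image_of_mem _ hgia
    omega

end Assembly

section Main

universe u v

/-- Bool-indexed family for the two factors (with `ULift`s to equalize universes). -/
def MM (G₁ : Type u) (G₂ : Type v) : Bool → Type (max u v) :=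
  fun b => Bool.casesOn b (ULift.{u} G₂) (ULift.{v} G₁)

instance {G₁ : Type u} {G₂ : Type v} [Group G₁] [Group G₂] (b : Bool) :
    Group (MM G₁ G₂ b) := by cases b <;> exact ULift.group

theorem main_aux {G₁ : Type u} {G₂ : Type v} [Group G₁] [Group G₂]
    (h₁ : ∃ H : Subgroup G₁, H.FiniteIndex ∧ IsDiffuse H)
    (h₂ : ∃ H : Subgroup G₂, H.FiniteIndex ∧ IsDiffuse H) :
    ∃ H : Subgroup (Monoid.Coprod G₁ G₂), H.FiniteIndex ∧ IsDiffuse H := by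
  classical
  obtain ⟨H₁, hfi₁, hd₁⟩ := h₁
  obtain ⟨H₂, hfi₂, hd₂⟩ := h₂
  -- the canonical map to the direct product
  let χ : CoprodI (MM G₁ G₂) →* G₁ × G₂ := CoprodI.lift (M := MM G₁ G₂) (N := G₁ × G₂)
    (fun b => Bool.casesOn (motive := fun b => MM G₁ G₂ b →* G₁ × G₂) b
      ((MonoidHom.inr G₁ G₂).comp MulEquiv.ulift.toMonoidHom)
      ((MonoidHom.inl G₁ G₂).comp MulEquiv.ulift.toMonoidHom))
  have hχt : ∀ m : MM G₁ G₂ true, χ (CoprodI.of m) = (ULift.down m, 1) := by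
    intro m
    rw [show χ (CoprodI.of m) = _ from CoprodI.lift_of _ m]
    rfl
  have hχf : ∀ m : MM G₁ G₂ false, χ (CoprodI.of m) = (1, ULift.down m) := by
    intro m
    rw [show χ (CoprodI.of m) = _ from CoprodI.lift_of _ m]
    rfl
  have hχ1 : ∀ (b : Bool) (m : MM G₁ G₂ b), χ (CoprodI.of m) = 1 → m = 1 := by
    intro b
    cases b
    · intro m h
      rw [hχf m] at h
      have := congrArg Prod.snd h
      exact ULift.ext _ _ this
    · intro m h
      rw [hχt m] at h
      have := congrArg Prod.fst h
      exact ULift.ext _ _ this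
  -- the embedding of the free product into the CoprodI model
  let ρ : Monoid.Coprod G₁ G₂ →* CoprodI (MM G₁ G₂) := Monoid.Coprod.lift
    ((CoprodI.of (M := MM G₁ G₂) (i := true)).comp MulEquiv.ulift.symm.toMonoidHom)
    ((CoprodI.of (M := MM G₁ G₂) (i := false)).comp MulEquiv.ulift.symm.toMonoidHom)
  let σ' : CoprodI (MM G₁ G₂) →* Monoid.Coprod G₁ G₂ := CoprodI.lift (M := MM G₁ G₂) (N := Monoid.Coprod G₁ G₂)
    (fun b => Bool.casesOn (motive := fun b => MM G₁ G₂ b →* Monoid.Coprod G₁ G₂) b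
      ((Monoid.Coprod.inr).comp MulEquiv.ulift.toMonoidHom)
      ((Monoid.Coprod.inl).comp MulEquiv.ulift.toMonoidHom))
  have hσρ : ∀ x, σ' (ρ x) = x := by
    have hcomp : σ'.comp ρ = MonoidHom.id _ := by
      apply Monoid.Coprod.hom_ext
      · apply MonoidHom.ext
        intro y
        show σ' (ρ (Monoid.Coprod.inl y)) = Monoid.Coprod.inl y
        refine (congrArg σ' (Monoid.Coprod.lift_apply_inl _ _ y)).trans ?_
        refine (CoprodI.lift_of _ _).trans ?_
        rfl
      · apply MonoidHom.ext
        intro y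
        show σ' (ρ (Monoid.Coprod.inr y)) = Monoid.Coprod.inr y
        refine (congrArg σ' (Monoid.Coprod.lift_apply_inr _ _ y)).trans ?_
        refine (CoprodI.lift_of _ _).trans ?_
        rfl
    intro x
    exact DFunLike.congr_fun hcomp x
  have hρinj : Function.Injective ρ := Function.LeftInverse.injective hσρ
  let ψ : Monoid.Coprod G₁ G₂ →* G₁ × G₂ := χ.comp ρ
  have hψsurj : Function.Surjective ψ := by
    intro p
    refine ⟨Monoid.Coprod.inl p.1 * Monoid.Coprod.inr p.2, ?_⟩
    show χ (ρ (Monoid.Coprod.inl p.1 * Monoid.Coprod.inr p.2)) = p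
    rw [map_mul, map_mul,
      show ρ (Monoid.Coprod.inl p.1) = _ from Monoid.Coprod.lift_apply_inl _ _ p.1,
      show ρ (Monoid.Coprod.inr p.2) = _ from Monoid.Coprod.lift_apply_inr _ _ p.2]
    show χ (CoprodI.of _) * χ (CoprodI.of _) = p
    rw [hχt, hχf]
    ext <;> simp <;> rfl
  refine ⟨Subgroup.comap ψ (H₁.prod H₂), ?_, ?_⟩
  · refine ⟨?_⟩
    rw [Subgroup.index_comap_of_surjective _ hψsurj, Subgroup.index_prod]
    exact mul_ne_zero hfi₁.index_ne_zero hfi₂.index_ne_zero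
  · set H := Subgroup.comap ψ (H₁.prod H₂) with hH
    have hmemH : ∀ x : H, ψ ((H.subtype) x) ∈ H₁.prod H₂ := by
      intro x
      exact Subgroup.mem_comap.mp x.2
    let f : ↥H →* ↥(H₁.prod H₂) := (ψ.comp H.subtype).codRestrict _ hmemH
    apply diffuse_extension f ?_ (subgroup_prod_diffuse hd₁ hd₂)
    -- the kernel of f embeds into the kernel of χ, which is diffuse
    have hmemker : ∀ x : f.ker, ρ (H.subtype ((f.ker).subtype x)) ∈ χ.ker := by
      intro x
      rw [MonoidHom.mem_ker]
      have hx : f x.1 = 1 := MonoidHom.mem_ker.mp x.2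
      have hx' : ψ ((H.subtype) x.1) = 1 := by
        have := congrArg Subtype.val hx
        exact this
      exact hx'
    apply diffuse_of_injective
      ((ρ.comp (H.subtype.comp (f.ker).subtype)).codRestrict χ.ker hmemker)
      ?_ (ker_diffuse χ hχ1)
    intro x y hxy
    have hval : ρ (H.subtype ((f.ker).subtype x)) = ρ (H.subtype ((f.ker).subtype y)) :=
      congrArg Subtype.val hxy
    have := hρinj hval
    exact Subtype.ext (Subtype.ext this)

end Main

end StmtAux

theorem stmt_9 {G₁ G₂ : Type*} [Group G₁] [Group G₂]
    (h₁ : ∃ H : Subgroup G₁, H.FiniteIndex ∧ IsDiffuse H)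
    (h₂ : ∃ H : Subgroup G₂, H.FiniteIndex ∧ IsDiffuse H) :
    ∃ H : Subgroup (Monoid.Coprod G₁ G₂), H.FiniteIndex ∧ IsDiffuse H :=
  StmtAux.main_aux h₁ h₂
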